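/- If w is a submultiplicative weight function on the integers satisfying the Gelfand–Raikov–Shilov condition (lim_{n→∞} w(n)^{1/n} = 1 and lim_{n→∞} w(-n)^{1/n} = 1), then every function f in the weighted Wiener algebra A_w (absolutely convergent Fourier series with weight w) that satisfies f(ω) ≠ 0 for all ω has an inverse 1/f in A_w. -/

import Mathlib

open scoped ENNReal
open Filter Complex

namespace WienerAux

/-! ### Weights -/

structure Weight where
  w : ℤ → ℝ
  pos : ∀ k, 0 < w k
  sub : ∀ k l, w (k + l) ≤ w k * w l
  one_le : ∀ k, 1 ≤ w k
  w0 : w 0 = 1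

variable (W : Weight)

lemma Weight.ne (k : ℤ) : (W.w k : ℂ) ≠ 0 := by
  exact_mod_cast Complex.ofReal_ne_zero.2 (W.pos k).ne'

/-! ### The twisting factor -/

noncomputable def rho (l m : ℤ) : ℂ := ((W.w (l + m) / (W.w l * W.w m) : ℝ) : ℂ)

lemma norm_rho_le_one (l m : ℤ) : ‖rho W l m‖ ≤ 1 := by
  rw [rho, Complex.norm_real, Real.norm_eq_abs, abs_of_pos
    (div_pos (W.pos _) (mul_pos (W.pos l) (W.pos m)))]
  rw [div_le_one (mul_pos (W.pos l) (W.pos m))]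
  exact W.sub l m

lemma rho_comm (l m : ℤ) : rho W l m = rho W m l := by
  rw [rho, rho, add_comm, mul_comm]

lemma rho_zero_left (m : ℤ) : rho W 0 m = 1 := by
  rw [rho, zero_add, W.w0, one_mul, div_self (W.pos m).ne']
  norm_num

/-! ### Shear equivalence and Cauchy products over ℤ -/

def shear : ℤ × ℤ ≃ ℤ × ℤ where
  toFun q := (q.2, q.1 - q.2)
  invFun p := (p.1 + p.2, p.1)
  left_inv := fun ⟨x, y⟩ => by simp <;> omega
  right_inv := fun ⟨x, y⟩ => by simp <;> omega

section Cauchy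

variable {K : Type*} [NormedField K] [CompleteSpace K]

lemma summable_shear {α : Type*} [AddCommMonoid α] [TopologicalSpace α] {f : ℤ × ℤ → α}
    (hF : Summable f) : Summable fun q : ℤ × ℤ => f (q.2, q.1 - q.2) := by
  have h : Summable (f ∘ shear) := (Equiv.summable_iff shear).2 hF
  exact h.congr fun q => rfl

lemma cauchy_sections {f g : ℤ → K} (hf : Summable fun k => ‖f k‖)
    (hg : Summable fun k => ‖g k‖) (k : ℤ) :
    Summable fun l => ‖f l * g (k - l)‖ :=
  ((summable_shear (f := fun p : ℤ × ℤ => ‖f p.1 * g p.2‖)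
    (hf.mul_norm hg)).prod_factor k).congr fun l => rfl

lemma cauchy_norm_summable {f g : ℤ → K} (hf : Summable fun k => ‖f k‖)
    (hg : Summable fun k => ‖g k‖) :
    Summable fun k => ∑' l, ‖f l * g (k - l)‖ := by
  have hG : Summable fun q : ℤ × ℤ => ‖f q.2 * g (q.1 - q.2)‖ :=
    summable_shear (f := fun p : ℤ × ℤ => ‖f p.1 * g p.2‖) (hf.mul_norm hg)
  refine ⟨_, hG.hasSum.prod_fiberwise fun k => ?_⟩
  exact ((hG.prod_factor k).congr fun l => rfl).hasSum

lemma cauchy_tsum {f g : ℤ → K} (hf : Summable fun k => ‖f k‖)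
    (hg : Summable fun k => ‖g k‖) :
    ∑' k, ∑' l, f l * g (k - l) = (∑' k, f k) * (∑' k, g k) := by
  have hF : Summable fun p : ℤ × ℤ => f p.1 * g p.2 := summable_mul_of_summable_norm hf hg
  have hG : Summable fun q : ℤ × ℤ => f q.2 * g (q.1 - q.2) :=
    summable_shear (f := fun p : ℤ × ℤ => f p.1 * g p.2) hF
  calc ∑' k, ∑' l, f l * g (k - l)
      = ∑' q : ℤ × ℤ, f q.2 * g (q.1 - q.2) := (Summable.tsum_prod' hG hG.prod_factor).symm
    _ = ∑' p : ℤ × ℤ, f p.1 * g p.2 := shear.tsum_eq (fun p : ℤ × ℤ => f p.1 * g p.2)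
    _ = (∑' k, f k) * (∑' k, g k) := (tsum_mul_tsum_of_summable_norm hf hg).symm

lemma cauchy_tsum_norm {f g : ℤ → K} (hf : Summable fun k => ‖f k‖)
    (hg : Summable fun k => ‖g k‖) :
    ∑' k, ∑' l, ‖f l‖ * ‖g (k - l)‖ = (∑' k, ‖f k‖) * (∑' k, ‖g k‖) := by
  have hf' : Summable fun k => ‖‖f k‖‖ := by simpa using hf
  have hg' : Summable fun k => ‖‖g k‖‖ := by simpa using hg
  exact cauchy_tsum hf' hg'

end Cauchy

/-! ### Twisted convolution -/

noncomputable def conv (a b : ℤ → ℂ) : ℤ → ℂ := fun k =>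
  ∑' l, a l * b (k - l) * rho W l (k - l)

variable {a b c : ℤ → ℂ}

lemma summand_norm_le (k l : ℤ) :
    ‖a l * b (k - l) * rho W l (k - l)‖ ≤ ‖a l‖ * ‖b (k - l)‖ := by
  rw [norm_mul, norm_mul]
  calc ‖a l‖ * ‖b (k - l)‖ * ‖rho W l (k - l)‖
      ≤ ‖a l‖ * ‖b (k - l)‖ * 1 := by
        gcongr; exact norm_rho_le_one W l (k - l)
    _ = ‖a l‖ * ‖b (k - l)‖ := mul_one _

lemma summand_norm_summable (ha : Summable fun k => ‖a k‖) (hb : Summable fun k => ‖b k‖)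
    (k : ℤ) : Summable fun l => ‖a l * b (k - l) * rho W l (k - l)‖ := by
  refine Summable.of_nonneg_of_le (fun _ => norm_nonneg _) (fun l => summand_norm_le W k l) ?_
  simpa [norm_mul] using cauchy_sections ha hb k

lemma summand_summable (ha : Summable fun k => ‖a k‖) (hb : Summable fun k => ‖b k‖) (k : ℤ) :
    Summable fun l => a l * b (k - l) * rho W l (k - l) :=
  (summand_norm_summable W ha hb k).of_norm

lemma conv_norm_le (ha : Summable fun k => ‖a k‖) (hb : Summable fun k => ‖b k‖) (k : ℤ) :
    ‖conv W a b k‖ ≤ ∑' l, ‖a l‖ * ‖b (k - l)‖ := by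
  have h1 : ‖conv W a b k‖ ≤ ∑' l, ‖a l * b (k - l) * rho W l (k - l)‖ :=
    norm_tsum_le_tsum_norm (summand_norm_summable W ha hb k)
  refine h1.trans (Summable.tsum_le_tsum (fun l => summand_norm_le W k l)
    (summand_norm_summable W ha hb k) ?_)
  simpa [norm_mul] using cauchy_sections ha hb k

lemma conv_summable_norm (ha : Summable fun k => ‖a k‖) (hb : Summable fun k => ‖b k‖) :
    Summable fun k => ‖conv W a b k‖ := by
  refine Summable.of_nonneg_of_le (fun _ => norm_nonneg _)
    (fun k => conv_norm_le W ha hb k) ?_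
  simpa [norm_mul] using cauchy_norm_summable ha hb

lemma conv_tsum_norm_le (ha : Summable fun k => ‖a k‖) (hb : Summable fun k => ‖b k‖) :
    ∑' k, ‖conv W a b k‖ ≤ (∑' k, ‖a k‖) * (∑' k, ‖b k‖) := by
  have h2 : Summable fun k => ∑' l, ‖a l‖ * ‖b (k - l)‖ := by
    simpa [norm_mul] using cauchy_norm_summable ha hb
  calc ∑' k, ‖conv W a b k‖ ≤ ∑' k, ∑' l, ‖a l‖ * ‖b (k - l)‖ :=
        Summable.tsum_le_tsum (conv_norm_le W ha hb) (conv_summable_norm W ha hb) h2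
    _ = (∑' k, ‖a k‖) * (∑' k, ‖b k‖) := cauchy_tsum_norm ha hb

/-- Pulling a "multiplicative" factor through the twisted convolution. -/
lemma conv_mul_eta (η : ℤ → ℂ) (hη : ∀ l m, η (l + m) * rho W l m = η l * η m) (k : ℤ) :
    conv W a b k * η k = ∑' l, (a l * η l) * (b (k - l) * η (k - l)) := by
  rw [conv, ← tsum_mul_right]
  refine tsum_congr fun l => ?_
  have hk : l + (k - l) = k := by ring
  have h := hη l (k - l)
  rw [hk] at h
  calc a l * b (k - l) * rho W l (k - l) * η k
      = a l * b (k - l) * (η k * rho W l (k - l)) := by ring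
    _ = a l * b (k - l) * (η l * η (k - l)) := by rw [h]
    _ = a l * η l * (b (k - l) * η (k - l)) := by ring

lemma conv_tsum_eta (ha : Summable fun k => ‖a k‖) (hb : Summable fun k => ‖b k‖)
    (η : ℤ → ℂ) (hη : ∀ l m, η (l + m) * rho W l m = η l * η m)
    (hη1 : ∀ k, ‖η k‖ ≤ 1) :
    ∑' k, conv W a b k * η k = (∑' k, a k * η k) * (∑' k, b k * η k) := by
  have ha' : Summable fun k => ‖a k * η k‖ := by
    refine Summable.of_nonneg_of_le (fun _ => norm_nonneg _) (fun k => ?_) ha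
    rw [norm_mul]
    calc ‖a k‖ * ‖η k‖ ≤ ‖a k‖ * 1 := by gcongr; exact hη1 k
      _ = ‖a k‖ := mul_one _
  have hb' : Summable fun k => ‖b k * η k‖ := by
    refine Summable.of_nonneg_of_le (fun _ => norm_nonneg _) (fun k => ?_) hb
    rw [norm_mul]
    calc ‖b k‖ * ‖η k‖ ≤ ‖b k‖ * 1 := by gcongr; exact hη1 k
      _ = ‖b k‖ := mul_one _
  rw [tsum_congr (conv_mul_eta W η hη)]
  exact cauchy_tsum ha' hb'

/-! ### Commutativity and associativity of the twisted convolution -/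

lemma conv_comm (k : ℤ) : conv W a b k = conv W b a k := by
  rw [conv, conv]
  have := (Equiv.subLeft k).tsum_eq (fun l => b l * a (k - l) * rho W l (k - l))
  rw [← this]
  refine tsum_congr fun l => ?_
  simp only [Equiv.subLeft_apply, sub_sub_cancel]
  rw [rho_comm W (k - l) l]
  ring

noncomputable def rho3 (l m n : ℤ) : ℂ := ((W.w (l + m + n) / (W.w l * W.w m * W.w n) : ℝ) : ℂ)

lemma rho_mul_rho (l m n : ℤ) : rho W m n * rho W l (m + n) = rho3 W l m n := by
  rw [rho, rho, rho3, ← Complex.ofReal_mul]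
  congr 1
  have h : l + (m + n) = l + m + n := by ring
  rw [h]
  have hl := (W.pos l).ne'
  have hm := (W.pos m).ne'
  have hn := (W.pos n).ne'
  have hmn := (W.pos (m + n)).ne'
  field_simp

lemma rho3_rotate (l m n : ℤ) : rho3 W n l m = rho3 W l m n := by
  rw [rho3, rho3]
  have h : n + l + m = l + m + n := by ring
  rw [h]
  congr 1
  ring

lemma norm_rho3_le_one (l m n : ℤ) : ‖rho3 W l m n‖ ≤ 1 := by
  rw [← rho_mul_rho, norm_mul]
  calc ‖rho W m n‖ * ‖rho W l (m + n)‖ ≤ 1 * 1 := by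
        gcongr <;> [exact norm_rho_le_one W m n; exact norm_rho_le_one W l (m + n)]
    _ = 1 := mul_one _

lemma norm_le_tsum_norm (ha : Summable fun k => ‖a k‖) (k : ℤ) : ‖a k‖ ≤ ∑' j, ‖a j‖ :=
  Summable.le_tsum ha k fun j _ => norm_nonneg _

lemma conv_conv (ha : Summable fun k => ‖a k‖) (hb : Summable fun k => ‖b k‖)
    (hc : Summable fun k => ‖c k‖) (k : ℤ) :
    conv W a (conv W b c) k =
      ∑' p : ℤ × ℤ, a p.1 * b p.2 * c (k - p.1 - p.2) * rho3 W p.1 p.2 (k - p.1 - p.2) := by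
  have hH : Summable fun p : ℤ × ℤ =>
      a p.1 * b p.2 * c (k - p.1 - p.2) * rho3 W p.1 p.2 (k - p.1 - p.2) := by
    refine Summable.of_norm (.of_nonneg_of_le (fun _ => norm_nonneg _) (fun p => ?_)
      (((ha.mul_of_nonneg hb (fun _ => norm_nonneg _) fun _ => norm_nonneg _)).mul_right
        (∑' j, ‖c j‖)))
    simp only [norm_mul]
    have hcs : (0 : ℝ) ≤ ∑' j, ‖c j‖ := tsum_nonneg fun _ => norm_nonneg _
    calc ‖a p.1‖ * ‖b p.2‖ * ‖c (k - p.1 - p.2)‖ * ‖rho3 W p.1 p.2 (k - p.1 - p.2)‖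
        ≤ ‖a p.1‖ * ‖b p.2‖ * (∑' j, ‖c j‖) * 1 :=
          mul_le_mul
            (mul_le_mul_of_nonneg_left (norm_le_tsum_norm hc _)
              (mul_nonneg (norm_nonneg _) (norm_nonneg _)))
            (norm_rho3_le_one W _ _ _) (norm_nonneg _)
            (mul_nonneg (mul_nonneg (norm_nonneg _) (norm_nonneg _)) hcs)
      _ = ‖a p.1‖ * ‖b p.2‖ * ∑' j, ‖c j‖ := mul_one _
  rw [conv]
  have step1 : ∀ l : ℤ, a l * conv W b c (k - l) * rho W l (k - l) =
      ∑' m, a l * b m * c (k - l - m) * rho3 W l m (k - l - m) := by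
    intro l
    rw [conv, ← tsum_mul_left, ← tsum_mul_right]
    refine tsum_congr fun m => ?_
    have h1 : k - l - m = k - l - m := rfl
    have h2 : rho W m (k - l - m) * rho W l (m + (k - l - m)) = rho3 W l m (k - l - m) :=
      rho_mul_rho W l m (k - l - m)
    have h3 : m + (k - l - m) = k - l := by ring
    rw [h3] at h2
    calc a l * (b m * c (k - l - m) * rho W m (k - l - m)) * rho W l (k - l)
        = a l * b m * c (k - l - m) * (rho W m (k - l - m) * rho W l (k - l)) := by ring
      _ = a l * b m * c (k - l - m) * rho3 W l m (k - l - m) := by rw [h2]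
  rw [tsum_congr step1]
  exact (Summable.tsum_prod' hH hH.prod_factor).symm

def assocEquiv (k : ℤ) : ℤ × ℤ ≃ ℤ × ℤ where
  toFun p := (p.2, k - p.1 - p.2)
  invFun q := (k - q.1 - q.2, q.1)
  left_inv := fun ⟨x, y⟩ => by simp <;> omega
  right_inv := fun ⟨x, y⟩ => by simp <;> omega

lemma conv_assoc (ha : Summable fun k => ‖a k‖) (hb : Summable fun k => ‖b k‖)
    (hc : Summable fun k => ‖c k‖) (k : ℤ) :
    conv W (conv W a b) c k = conv W a (conv W b c) k := by
  rw [conv_comm W, conv_conv W hc ha hb, conv_conv W ha hb hc]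
  have he : ∀ p : ℤ × ℤ,
      c p.1 * a p.2 * b (k - p.1 - p.2) * rho3 W p.1 p.2 (k - p.1 - p.2) =
      (fun q : ℤ × ℤ => a q.1 * b q.2 * c (k - q.1 - q.2) * rho3 W q.1 q.2 (k - q.1 - q.2))
        (assocEquiv k p) := by
    rintro ⟨x, y⟩
    show c x * a y * b (k - x - y) * rho3 W x y (k - x - y) =
      a y * b (k - x - y) * c (k - y - (k - x - y)) * rho3 W y (k - x - y) (k - y - (k - x - y))
    have h1 : k - y - (k - x - y) = x := by ring
    rw [h1, ← rho3_rotate W y (k - x - y) x]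
    ring
  rw [tsum_congr he]
  exact (assocEquiv k).tsum_eq
    (fun q : ℤ × ℤ => a q.1 * b q.2 * c (k - q.1 - q.2) * rho3 W q.1 q.2 (k - q.1 - q.2))

/-! ### The weighted Wiener algebra as a Banach algebra -/

instance factOne : Fact ((1 : ℝ≥0∞) ≤ 1) := ⟨le_rfl⟩

noncomputable def Aw (_W : Weight) : Type := lp (fun _ : ℤ => ℂ) 1

variable {W}

def toLp (a : Aw W) : lp (fun _ : ℤ => ℂ) 1 := a

def ofLp (a : lp (fun _ : ℤ => ℂ) 1) : Aw W := a

noncomputable def coeff (a : Aw W) : ℤ → ℂ := ⇑(toLp a)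

lemma coeff_ofLp (a : lp (fun _ : ℤ => ℂ) 1) : coeff (ofLp (W := W) a) = ⇑a := rfl

noncomputable instance : NormedAddCommGroup (Aw W) :=
  inferInstanceAs (NormedAddCommGroup (lp (fun _ : ℤ => ℂ) 1))

noncomputable instance : NormedSpace ℂ (Aw W) :=
  inferInstanceAs (NormedSpace ℂ (lp (fun _ : ℤ => ℂ) 1))

instance : CompleteSpace (Aw W) :=
  inferInstanceAs (CompleteSpace (lp (fun _ : ℤ => ℂ) 1))

lemma coeff_injective : Function.Injective (coeff (W := W)) := by
  intro a b h
  exact lp.ext h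

lemma coeff_add (a b : Aw W) : coeff (a + b) = coeff a + coeff b := lp.coeFn_add _ _

lemma coeff_zero : coeff (0 : Aw W) = 0 := lp.coeFn_zero _ _

lemma coeff_smul (z : ℂ) (a : Aw W) : coeff (z • a) = z • coeff a := lp.coeFn_smul _ _

lemma memℓp_of_summable {f : ℤ → ℂ} (h : Summable fun k => ‖f k‖) :
    Memℓp f (1 : ℝ≥0∞) := by
  apply memℓp_gen
  simpa using h

lemma summable_coeff (a : Aw W) : Summable fun k => ‖coeff a k‖ := by
  have h := (lp.memℓp (toLp a)).summable (p := 1) (by norm_num)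
  simp at h; exact h

lemma norm_eq (a : Aw W) : ‖a‖ = ∑' k, ‖coeff a k‖ := by
  have h := lp.norm_eq_tsum_rpow (p := 1) (by norm_num) (toLp a)
  simp at h; exact h

/-- Multiplication: twisted convolution. -/
noncomputable instance : Mul (Aw W) :=
  ⟨fun a b => ofLp ⟨conv W (coeff a) (coeff b),
    memℓp_of_summable (conv_summable_norm W (summable_coeff a) (summable_coeff b))⟩⟩

lemma coeff_mul (a b : Aw W) : coeff (a * b) = conv W (coeff a) (coeff b) := rfl

/-- Basis elements scaled by the weight: `EE n` has coefficient `w n` at `n`. -/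
noncomputable def EE (W : Weight) (n : ℤ) : Aw W := ofLp (lp.single 1 n ((W.w n : ℂ)))

lemma coeff_EE (n k : ℤ) : coeff (EE W n) k = if k = n then ((W.w n : ℝ) : ℂ) else 0 := by
  rcases eq_or_ne k n with rfl | h
  · simp [EE, coeff_ofLp, lp.single_apply_self]
  · simp [EE, coeff_ofLp, lp.single_apply_ne _ _ _ h, h]

lemma norm_EE (n : ℤ) : ‖EE W n‖ = W.w n := by
  rw [norm_eq]
  rw [tsum_eq_single n]
  · rw [coeff_EE, if_pos rfl, Complex.norm_real, Real.norm_eq_abs,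
      abs_of_pos (W.pos n)]
  · intro k hk
    rw [coeff_EE, if_neg hk, norm_zero]

lemma conv_one_left (b : ℤ → ℂ) (k : ℤ) :
    conv W (coeff (EE W 0)) b k = b k := by
  rw [conv, tsum_eq_single 0]
  · rw [coeff_EE, if_pos rfl, W.w0, rho_zero_left, sub_zero]
    simp
  · intro l hl
    rw [coeff_EE, if_neg hl]
    simp

noncomputable instance : One (Aw W) := ⟨EE W 0⟩

lemma one_def : (1 : Aw W) = EE W 0 := rfl

lemma coeff_one (k : ℤ) : coeff (1 : Aw W) k = if k = 0 then 1 else 0 := by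
  rw [one_def, coeff_EE]
  simp [W.w0]

noncomputable instance : CommRing (Aw W) where
  __ := (inferInstance : AddCommGroup (Aw W))
  mul := (· * ·)
  left_distrib a b c := by
    apply coeff_injective
    rw [coeff_mul, coeff_add, coeff_add, coeff_mul, coeff_mul]
    funext k
    simp only [conv, Pi.add_apply]
    rw [← Summable.tsum_add
      (summand_summable W (summable_coeff a) (summable_coeff b) k)
      (summand_summable W (summable_coeff a) (summable_coeff c) k)]
    refine tsum_congr fun l => ?_
    ring
  right_distrib a b c := by
    apply coeff_injective
    rw [coeff_mul, coeff_add, coeff_add, coeff_mul, coeff_mul]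
    funext k
    simp only [conv, Pi.add_apply]
    rw [← Summable.tsum_add
      (summand_summable W (summable_coeff a) (summable_coeff c) k)
      (summand_summable W (summable_coeff b) (summable_coeff c) k)]
    refine tsum_congr fun l => ?_
    ring
  zero_mul a := by
    apply coeff_injective
    rw [coeff_mul, coeff_zero]
    funext k
    simp [conv]
  mul_zero a := by
    apply coeff_injective
    rw [coeff_mul, coeff_zero]
    funext k
    simp [conv]
  mul_assoc a b c := by
    apply coeff_injective
    rw [coeff_mul, coeff_mul, coeff_mul, coeff_mul]
    funext k
    exact conv_assoc W (summable_coeff a) (summable_coeff b) (summable_coeff c) k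
  one_mul a := by
    apply coeff_injective
    rw [coeff_mul]
    funext k
    exact conv_one_left (coeff a) k
  mul_one a := by
    apply coeff_injective
    rw [coeff_mul]
    funext k
    rw [conv_comm W]
    exact conv_one_left (coeff a) k
  mul_comm a b := by
    apply coeff_injective
    rw [coeff_mul, coeff_mul]
    funext k
    exact conv_comm W k

noncomputable instance : NormedCommRing (Aw W) where
  __ := (inferInstance : NormedAddCommGroup (Aw W))
  __ := (inferInstance : CommRing (Aw W))
  norm_mul_le a b := by
    rw [norm_eq, norm_eq, norm_eq, coeff_mul]
    exact conv_tsum_norm_le W (summable_coeff a) (summable_coeff b)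

instance : NormOneClass (Aw W) := by
  constructor
  rw [norm_eq, tsum_eq_single 0]
  · rw [coeff_one, if_pos rfl, norm_one]
  · intro k hk
    rw [coeff_one, if_neg hk, norm_zero]

lemma smul_mul_assoc' (z : ℂ) (a b : Aw W) : (z • a) * b = z • (a * b) := by
  apply coeff_injective
  rw [coeff_mul, coeff_smul, coeff_smul, coeff_mul]
  funext k
  simp only [conv, Pi.smul_apply, smul_eq_mul]
  rw [← tsum_mul_left]
  refine tsum_congr fun l => ?_
  ring

noncomputable instance : Algebra ℂ (Aw W) :=
  Algebra.ofModule smul_mul_assoc'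
    (fun z a b => by
      rw [mul_comm, smul_mul_assoc' z b a, mul_comm])

noncomputable instance : NormedAlgebra ℂ (Aw W) where
  norm_smul_le z a := norm_smul_le z a

/-! ### Multiplicativity on basis elements -/

lemma EE_mul (n m : ℤ) : EE W n * EE W m = EE W (n + m) := by
  apply coeff_injective
  rw [coeff_mul]
  funext k
  rw [conv, tsum_eq_single n (fun l hl => by rw [coeff_EE, if_neg hl, zero_mul, zero_mul])]
  rw [coeff_EE, if_pos rfl, coeff_EE, coeff_EE]
  rcases eq_or_ne k (n + m) with rfl | hk
  · rw [if_pos rfl, if_pos (show n + m - n = m by ring),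
      show n + m - n = m from by ring, rho]
    rw [← Complex.ofReal_mul, ← Complex.ofReal_mul]
    congr 1
    have hn := (W.pos n).ne'
    have hm' := (W.pos m).ne'
    field_simp
  · rw [if_neg hk, if_neg (show k - n ≠ m by omega)]
    ring

/-! ### Radius bounds from the GRS condition -/

lemma le_one_of_pow_le {x : ℝ} (hx : 0 ≤ x) {g : ℕ → ℝ}
    (hg : Tendsto (fun n : ℕ => g n ^ ((n : ℝ)⁻¹)) atTop (nhds 1))
    (hle : ∀ n : ℕ, x ^ n ≤ g n) : x ≤ 1 := by
  refine ge_of_tendsto hg ?_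
  filter_upwards [eventually_ge_atTop 1] with n hn
  have hn' : (n : ℝ) ≠ 0 := Nat.cast_ne_zero.2 (by omega)
  have hx1 : x = (x ^ n) ^ ((n : ℝ)⁻¹) := by
    rw [← Real.rpow_natCast x n, ← Real.rpow_mul hx, mul_inv_cancel₀ hn', Real.rpow_one]
  rw [hx1]
  exact Real.rpow_le_rpow (by positivity) (hle n) (by positivity)

lemma one_le_of_GRS {x : ℝ} (hx : 0 < x) {g : ℕ → ℝ} (hgpos : ∀ n, 0 < g n)
    (hg : Tendsto (fun n : ℕ => g n ^ ((n : ℝ)⁻¹)) atTop (nhds 1))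
    (k' : ℕ) (hk' : 1 ≤ k') (hbd : ∀ m : ℕ, 1 ≤ m → g (k' * m) ≤ x ^ m) : 1 ≤ x := by
  have hkpos : (0 : ℝ) < (k' : ℝ) := by exact_mod_cast Nat.lt_of_lt_of_le Nat.zero_lt_one hk'
  have hmono : Tendsto (fun m : ℕ => k' * m) atTop atTop := by
    apply Filter.tendsto_atTop_atTop.2
    intro b
    exact ⟨b, fun a ha => le_trans ha (Nat.le_mul_of_pos_left a (by omega))⟩
  have hcomp := hg.comp hmono
  have key : 1 ≤ x ^ ((k' : ℝ)⁻¹) := by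
    refine le_of_tendsto hcomp ?_
    filter_upwards [eventually_ge_atTop 1] with m hm
    have hm' : (m : ℝ) ≠ 0 := Nat.cast_ne_zero.2 (by omega)
    have hk'' : (k' : ℝ) ≠ 0 := hkpos.ne'
    have h1 : g (k' * m) ^ ((↑(k' * m) : ℝ)⁻¹) ≤ (x ^ m) ^ ((↑(k' * m) : ℝ)⁻¹) :=
      Real.rpow_le_rpow (hgpos _).le (hbd m hm) (by positivity)
    have h2 : (x ^ m) ^ ((↑(k' * m) : ℝ)⁻¹) = x ^ ((k' : ℝ)⁻¹) := by
      rw [← Real.rpow_natCast x m, ← Real.rpow_mul hx.le]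
      congr 1
      push_cast
      field_simp
      try ring
    exact h1.trans (le_of_eq h2)
  by_contra hlt
  push_neg at hlt
  have h3 : x ^ ((k' : ℝ)⁻¹) < 1 := Real.rpow_lt_one hx.le hlt (inv_pos.2 hkpos)
  linarith

/-! ### Evaluation of characters -/

lemma char_eval
    (hp : Tendsto (fun n : ℕ => W.w (n : ℤ) ^ ((n : ℝ)⁻¹)) atTop (nhds 1))
    (hm : Tendsto (fun n : ℕ => W.w (-(n : ℤ)) ^ ((n : ℝ)⁻¹)) atTop (nhds 1))
    (φ : Aw W →ₐ[ℂ] ℂ) (c : ℤ → ℂ) (a : Aw W) (ha : ∀ k, coeff a k = c k * W.w k) :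
    ∃ z : ℂ, ‖z‖ = 1 ∧ φ a = ∑' k : ℤ, c k * z ^ k := by
  set z := φ (EE W 1) with hz
  set ζ := φ (EE W (-1)) with hζ
  have hzζ : z * ζ = 1 := by
    have h10 : (1 : ℤ) + (-1) = 0 := by ring
    rw [hz, hζ, ← map_mul, EE_mul, h10, ← one_def, map_one]
  have hzpow : ∀ n : ℕ, φ (EE W (n : ℤ)) = z ^ n := by
    intro n
    induction n with
    | zero =>
      rw [Nat.cast_zero, pow_zero, ← one_def, map_one]
    | succ n ih =>
      have hE : EE W ((n + 1 : ℕ) : ℤ) = EE W (n : ℤ) * EE W 1 := by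
        rw [EE_mul]
        congr 1
        try push_cast
        try ring
      rw [hE, map_mul, ih, pow_succ, hz]
  have hζpow : ∀ n : ℕ, φ (EE W (-(n : ℤ))) = ζ ^ n := by
    intro n
    induction n with
    | zero =>
      rw [Nat.cast_zero, pow_zero, neg_zero, ← one_def, map_one]
    | succ n ih =>
      have hE : EE W (-((n + 1 : ℕ) : ℤ)) = EE W (-(n : ℤ)) * EE W (-1) := by
        rw [EE_mul]
        congr 1
        try push_cast
        try ring
      rw [hE, map_mul, ih, pow_succ, hζ]
  have hbound : ∀ n : ℤ, ‖φ (EE W n)‖ ≤ W.w n := fun n => by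
    have h := AlgHom.norm_apply_le_self φ (EE W n)
    rwa [norm_EE] at h
  have hz1 : ‖z‖ ≤ 1 := by
    refine le_one_of_pow_le (norm_nonneg z) hp fun n => ?_
    calc ‖z‖ ^ n = ‖z ^ n‖ := (norm_pow z n).symm
      _ = ‖φ (EE W (n : ℤ))‖ := by rw [hzpow n]
      _ ≤ W.w (n : ℤ) := hbound _
  have hζ1 : ‖ζ‖ ≤ 1 := by
    refine le_one_of_pow_le (norm_nonneg ζ) hm fun n => ?_
    calc ‖ζ‖ ^ n = ‖ζ ^ n‖ := (norm_pow ζ n).symm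
      _ = ‖φ (EE W (-(n : ℤ)))‖ := by rw [hζpow n]
      _ ≤ W.w (-(n : ℤ)) := hbound _
  have hnorm1 : ‖z‖ = 1 := by
    have h1 : ‖z‖ * ‖ζ‖ = 1 := by rw [← norm_mul, hzζ, norm_one]
    nlinarith [norm_nonneg z, norm_nonneg ζ]
  have habs : ‖z‖ = 1 := hnorm1
  have hzne : z ≠ 0 := by
    intro h
    rw [h, zero_mul] at hzζ
    exact zero_ne_one hzζ
  have hζinv : ζ = z⁻¹ := eq_inv_of_mul_eq_one_left (by rw [mul_comm]; exact hzζ)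
  have hall : ∀ k : ℤ, φ (EE W k) = z ^ k := by
    intro k
    rcases le_or_gt 0 k with hk | hk
    · lift k to ℕ using hk
      rw [zpow_natCast]
      exact hzpow k
    · obtain ⟨n, rfl⟩ : ∃ n : ℕ, k = -(n : ℤ) := ⟨k.natAbs, by omega⟩
      rw [hζpow n, hζinv, inv_pow, ← zpow_natCast z n, ← zpow_neg]
  have h1 : ∀ n : ℤ, c n • EE W n = ofLp (lp.single 1 n (coeff a n)) := by
    intro n
    apply coeff_injective
    funext k
    rw [coeff_smul, Pi.smul_apply, smul_eq_mul, coeff_EE, coeff_ofLp]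
    rcases eq_or_ne k n with rfl | hkn
    · rw [if_pos rfl, lp.single_apply_self, ha k]
    · rw [if_neg hkn, lp.single_apply_ne _ _ _ hkn, mul_zero]
  have hsum : HasSum (fun n => c n • EE W n) a := by
    rw [funext h1]
    exact lp.hasSum_single (by norm_num) (toLp a)
  have h2 : HasSum (fun n => φ (c n • EE W n)) (φ a) := by
    have h := hsum.mapL φ.toContinuousLinearMap
    simpa using h
  have h3 : ∀ n : ℤ, φ (c n • EE W n) = c n * z ^ n := by
    intro n
    rw [map_smul, smul_eq_mul, hall n]
  refine ⟨z, habs, ?_⟩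
  rw [← h2.tsum_eq]
  exact tsum_congr h3

/-! ### The key inversion lemma -/

lemma key (W : Weight)
    (hp : Tendsto (fun n : ℕ => W.w (n : ℤ) ^ ((n : ℝ)⁻¹)) atTop (nhds 1))
    (hm : Tendsto (fun n : ℕ => W.w (-(n : ℤ)) ^ ((n : ℝ)⁻¹)) atTop (nhds 1))
    (c : ℤ → ℂ) (hc : Summable fun k => ‖c k‖ * W.w k)
    (hnz : ∀ z : ℂ, ‖z‖ = 1 → (∑' k : ℤ, c k * z ^ k) ≠ 0) :
    ∃ b : ℤ → ℂ, (Summable fun k => ‖b k‖ * W.w k) ∧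
      ∀ z : ℂ, ‖z‖ = 1 → (∑' k : ℤ, b k * z ^ k) * (∑' k : ℤ, c k * z ^ k) = 1 := by
  have hmem : Memℓp (fun k : ℤ => c k * (W.w k : ℂ)) (1 : ℝ≥0∞) := by
    apply memℓp_of_summable
    refine hc.congr fun k => ?_
    rw [norm_mul, Complex.norm_real, Real.norm_eq_abs, abs_of_pos (W.pos k)]
  set a : Aw W := ofLp ⟨fun k : ℤ => c k * (W.w k : ℂ), hmem⟩ with ha_def
  have ha : ∀ k, coeff a k = c k * W.w k := fun k => rfl
  have hunit : IsUnit a := by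
    by_contra hnu
    obtain ⟨χ, hχ⟩ := WeakDual.CharacterSpace.exists_apply_eq_zero hnu
    set φ := WeakDual.CharacterSpace.equivAlgHom χ with hφ
    obtain ⟨z, habs, heq⟩ := char_eval hp hm φ c a ha
    refine hnz z habs ?_
    rw [← heq, hφ]
    rw [show ⇑(WeakDual.CharacterSpace.equivAlgHom χ) = ⇑χ from
      WeakDual.CharacterSpace.equivAlgHom_coe χ]
    exact hχ
  obtain ⟨u, hu⟩ := hunit.exists_left_inv
  refine ⟨fun k => coeff u k * ((W.w k : ℂ))⁻¹, ?_, ?_⟩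
  · refine (summable_coeff u).congr fun k => ?_
    rw [norm_mul, norm_inv, Complex.norm_real, Real.norm_eq_abs, abs_of_pos (W.pos k),
      mul_assoc, inv_mul_cancel₀ (W.pos k).ne', mul_one]
  · intro z habs
    have hzne : z ≠ 0 := by
      intro h
      rw [h] at habs
      simpa using habs
    have hη : ∀ l m : ℤ, (fun k : ℤ => z ^ k * ((W.w k : ℂ))⁻¹) (l + m) * rho W l m =
        (fun k : ℤ => z ^ k * ((W.w k : ℂ))⁻¹) l * (fun k : ℤ => z ^ k * ((W.w k : ℂ))⁻¹) m := by
      intro l m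
      simp only
      rw [rho, zpow_add₀ hzne]
      have hl := W.ne l
      have hmm := W.ne m
      have hlm := W.ne (l + m)
      have hlm' : Complex.ofReal (W.w l * W.w m) ≠ 0 := by
        rw [Complex.ofReal_ne_zero]
        exact (mul_pos (W.pos l) (W.pos m)).ne'
      push_cast
      field_simp
      try ring
    have hη1 : ∀ k : ℤ, ‖(fun k : ℤ => z ^ k * ((W.w k : ℂ))⁻¹) k‖ ≤ 1 := by
      intro k
      simp only
      rw [norm_mul, norm_zpow, habs, one_zpow, one_mul, norm_inv,
        Complex.norm_real, Real.norm_eq_abs, abs_of_pos (W.pos k)]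
      calc (W.w k)⁻¹ = 1 / W.w k := (one_div _).symm
        _ ≤ 1 := by
          rw [div_le_one (W.pos k)]
          exact W.one_le k
    have hmain := conv_tsum_eta W (summable_coeff u) (summable_coeff a)
      (fun k : ℤ => z ^ k * ((W.w k : ℂ))⁻¹) hη hη1
    have h1 : conv W (coeff u) (coeff a) = coeff (1 : Aw W) := by rw [← coeff_mul, hu]
    rw [h1] at hmain
    have h2 : ∑' k : ℤ, coeff (1 : Aw W) k * (z ^ k * ((W.w k : ℂ))⁻¹) = 1 := by
      rw [tsum_eq_single 0 (fun k hk => by rw [coeff_one, if_neg hk, zero_mul])]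
      rw [coeff_one, if_pos rfl, one_mul, zpow_zero, one_mul, W.w0]
      norm_num
    rw [h2] at hmain
    have hbz : ∀ k : ℤ, coeff u k * (z ^ k * ((W.w k : ℂ))⁻¹) =
        (coeff u k * ((W.w k : ℂ))⁻¹) * z ^ k := fun k => by ring
    have hcz : ∀ k : ℤ, coeff a k * (z ^ k * ((W.w k : ℂ))⁻¹) = c k * z ^ k := by
      intro k
      rw [ha k]
      have hk := W.ne k
      field_simp
    rw [tsum_congr hbz, tsum_congr hcz] at hmain
    exact hmain.symm

end WienerAux

/-- Inverse-closedness of the weighted Wiener algebra under the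
Gelfand–Raikov–Shilov condition. -/
theorem wiener_algebra_inverse
    (w : ℤ → ℝ) (hw_pos : ∀ k, 0 < w k)
    (hw_sub : ∀ k l, w (k + l) ≤ w k * w l)
    (hGRS_plus : Filter.Tendsto (fun n : ℕ => (w (n : ℤ)) ^ ((n : ℝ)⁻¹))
      Filter.atTop (nhds 1))
    (hGRS_minus : Filter.Tendsto (fun n : ℕ => (w (-(n : ℤ))) ^ ((n : ℝ)⁻¹))
      Filter.atTop (nhds 1))
    (c : ℤ → ℂ) (hc : Summable (fun k => ‖c k‖ * w k))
    (f : ℝ → ℂ)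
    (hf : ∀ t : ℝ, f t = ∑' k : ℤ, c k * Complex.exp (2 * Real.pi * Complex.I * (k : ℂ) * (t : ℂ)))
    (hne : ∀ t : ℝ, f t ≠ 0) :
    ∃ b : ℤ → ℂ, Summable (fun k => ‖b k‖ * w k) ∧
      ∀ t : ℝ, (∑' k : ℤ, b k * Complex.exp (2 * Real.pi * Complex.I * (k : ℂ) * (t : ℂ))) * f t = 1 := by
  classical
  -- iterated submultiplicativity
  have hgen : ∀ j : ℕ, 1 ≤ j → ∀ k : ℤ, w (k * j) ≤ w k ^ j := by
    intro j hj
    induction j, hj using Nat.le_induction with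
    | base =>
      intro k
      simp [mul_one]
    | succ j hj ih =>
      intro k
      have h1 : (k * ((j + 1 : ℕ) : ℤ)) = k * (j : ℤ) + k := by push_cast; ring
      rw [h1, pow_succ]
      calc w (k * (j : ℤ) + k) ≤ w (k * (j : ℤ)) * w k := hw_sub _ _
        _ ≤ w k ^ j * w k := mul_le_mul_of_nonneg_right (ih k) (hw_pos k).le
  -- From the GRS condition, every weight value is at least 1
  have hw1 : ∀ k : ℤ, 1 ≤ w k := by
    intro k
    rcases lt_trichotomy k 0 with hk | rfl | hk
    · have hk' : 1 ≤ (-k).toNat := by omega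
      refine WienerAux.one_le_of_GRS (hw_pos k) (fun n => hw_pos _) hGRS_minus
        (-k).toNat hk' ?_
      intro m hm
      have h1 : (((-k).toNat : ℤ)) = -k := Int.toNat_of_nonneg (by omega)
      have heq : (-((((-k).toNat * m : ℕ)) : ℤ)) = k * (m : ℤ) := by
        rw [Nat.cast_mul, h1]
        ring
      rw [heq]
      exact hgen m hm k
    · have h0 := hw_sub 0 0
      rw [zero_add] at h0
      nlinarith [hw_pos 0]
    · have hk' : 1 ≤ k.toNat := by omega
      refine WienerAux.one_le_of_GRS (hw_pos k) (fun n => hw_pos _) hGRS_plus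
        k.toNat hk' ?_
      intro m hm
      have h1 : ((k.toNat : ℤ)) = k := Int.toNat_of_nonneg (by omega)
      have heq : ((((k.toNat * m : ℕ)) : ℤ)) = k * (m : ℤ) := by
        rw [Nat.cast_mul, h1]
      rw [heq]
      exact hgen m hm k
  -- the normalized weight
  set v : ℤ → ℝ := fun k => if k = 0 then 1 else w k with hv
  have hvle : ∀ k, v k ≤ w k := by
    intro k
    rcases eq_or_ne k 0 with rfl | hk
    · simp [hv, hw1 0]
    · simp [hv, hk]
  have hvpos : ∀ k, 0 < v k := by
    intro k
    rcases eq_or_ne k 0 with rfl | hk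
    · simp [hv]
    · simp [hv, hk, hw_pos k]
  have hvone : ∀ k, 1 ≤ v k := by
    intro k
    rcases eq_or_ne k 0 with rfl | hk
    · simp [hv]
    · simp [hv, hk, hw1 k]
  have hvsub : ∀ k l, v (k + l) ≤ v k * v l := by
    intro k l
    rcases eq_or_ne k 0 with rfl | hk
    · simp [hv, zero_add]
    rcases eq_or_ne l 0 with rfl | hl
    · simp [hv, add_zero]
    rcases eq_or_ne (k + l) 0 with h0 | h0
    · simp only [hv, if_pos h0, if_neg hk, if_neg hl]
      have h1 := hw1 k
      have h2 := hw1 l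
      nlinarith
    · simp only [hv, if_neg h0, if_neg hk, if_neg hl]
      exact hw_sub k l
  set V : WienerAux.Weight :=
    { w := v, pos := hvpos, sub := hvsub, one_le := hvone, w0 := by simp [hv] } with hV
  -- GRS for the normalized weight
  have hvp : Filter.Tendsto (fun n : ℕ => V.w (n : ℤ) ^ ((n : ℝ)⁻¹)) Filter.atTop (nhds 1) := by
    refine hGRS_plus.congr' ?_
    filter_upwards [Filter.eventually_ge_atTop 1] with n hn
    have h1 : ((n : ℤ)) ≠ 0 := by omega
    simp [hV, hv, h1, show n ≠ 0 by omega]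
  have hvm : Filter.Tendsto (fun n : ℕ => V.w (-(n : ℤ)) ^ ((n : ℝ)⁻¹)) Filter.atTop (nhds 1) := by
    refine hGRS_minus.congr' ?_
    filter_upwards [Filter.eventually_ge_atTop 1] with n hn
    have h1 : (-(n : ℤ)) ≠ 0 := by omega
    simp [hV, hv, h1]
  have hc' : Summable fun k => ‖c k‖ * V.w k := by
    refine Summable.of_nonneg_of_le
      (fun k => mul_nonneg (norm_nonneg _) (hvpos k).le) (fun k => ?_) hc
    exact mul_le_mul_of_nonneg_left (hvle k) (norm_nonneg _)
  -- the non-vanishing hypothesis on the circle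
  have hnz : ∀ z : ℂ, ‖z‖ = 1 → (∑' k : ℤ, c k * z ^ k) ≠ 0 := by
    intro z hz
    obtain ⟨θ, hθ⟩ := (Complex.norm_eq_one_iff z).mp hz
    have hexp : ∀ k : ℤ,
        c k * Complex.exp (2 * Real.pi * Complex.I * (k : ℂ) * ((θ / (2 * Real.pi) : ℝ) : ℂ)) =
        c k * z ^ k := by
      intro k
      congr 1
      rw [← hθ, ← Complex.exp_int_mul]
      congr 1
      have hpi : (Real.pi : ℂ) ≠ 0 := Complex.ofReal_ne_zero.2 Real.pi_ne_zero
      push_cast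
      field_simp
      try ring
    have h5 := hne (θ / (2 * Real.pi))
    rw [hf (θ / (2 * Real.pi))] at h5
    rw [tsum_congr hexp] at h5
    exact h5
  obtain ⟨b, hbsum, hbz⟩ := WienerAux.key V hvp hvm c hc' hnz
  refine ⟨b, ?_, ?_⟩
  · have hsum2 : Summable fun k => w 0 * (‖b k‖ * V.w k) := hbsum.mul_left _
    refine Summable.of_nonneg_of_le
      (fun k => mul_nonneg (norm_nonneg _) (hw_pos k).le) (fun k => ?_) hsum2
    rcases eq_or_ne k 0 with rfl | hk
    · have hval : V.w (0 : ℤ) = 1 := by simp [hV, hv]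
      rw [hval, mul_one]
      nlinarith [norm_nonneg (b 0)]
    · have hval : V.w k = w k := by simp [hV, hv, hk]
      rw [hval]
      nlinarith [hw1 0, hw_pos k, norm_nonneg (b k), mul_nonneg (norm_nonneg (b k)) (hw_pos k).le]
  · intro t
    have habs : ‖Complex.exp (2 * Real.pi * Complex.I * (t : ℂ))‖ = 1 := by
      rw [Complex.norm_exp]
      have hre : (2 * (Real.pi : ℂ) * Complex.I * (t : ℂ)).re = 0 := by simp
      rw [hre, Real.exp_zero]
    have hexp : ∀ k : ℤ,
        Complex.exp (2 * Real.pi * Complex.I * (k : ℂ) * (t : ℂ)) =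
        (Complex.exp (2 * Real.pi * Complex.I * (t : ℂ))) ^ k := by
      intro k
      rw [← Complex.exp_int_mul]
      congr 1
      push_cast
      ring
    have h := hbz (Complex.exp (2 * Real.pi * Complex.I * (t : ℂ))) habs
    rw [hf t]
    have h1 : (∑' k : ℤ, b k * Complex.exp (2 * Real.pi * Complex.I * (k : ℂ) * (t : ℂ))) =
        ∑' k : ℤ, b k * (Complex.exp (2 * Real.pi * Complex.I * (t : ℂ))) ^ k :=
      tsum_congr fun k => by rw [hexp k]
    have h2 : (∑' k : ℤ, c k * Complex.exp (2 * Real.pi * Complex.I * (k : ℂ) * (t : ℂ))) =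
        ∑' k : ℤ, c k * (Complex.exp (2 * Real.pi * Complex.I * (t : ℂ))) ^ k :=
      tsum_congr fun k => by rw [hexp k]
    rw [h1, h2]
    exact h
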